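/- Every $H$-valued random variable of the form $F = \varphi(N(B_1), \ldots, N(B_n))$, where $B_1,\ldots,B_n$ are measurable sets of finite $\mu$-measure and $\varphi: \mathbb{N}_0^n \to H$ is bounded, belongs to $\mathbb{D}^{1,q}(H)$ for every $q > 1$; moreover, the space $\bigcap_{q>1}\mathbb{D}^{1,q}(H)\cap L^\infty(\Omega;H)$ is dense in $L^p(\Omega;H)$ for every $p>1$. -/

import Mathlib

open MeasureTheory Filter
open scoped ENNReal RealInnerProductSpace

/-- Any function from a countable measurable-singleton space is strongly measurable. -/
lemma sm_of_countable' {α H : Type*} [MeasurableSpace α] [MeasurableSingletonClass α]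
    [Countable α] [Nonempty α] [TopologicalSpace H] (φ : α → H) :
    StronglyMeasurable φ := by
  classical
  obtain ⟨u, hu⟩ := exists_surjective_nat α
  refine ⟨fun n => ⟨fun a => if a ∈ u '' Set.Iic n then φ a else φ (u 0), ?_, ?_⟩, fun a => ?_⟩
  · intro c
    exact (Set.to_countable _).measurableSet
  · apply Set.Finite.subset
      (Set.Finite.union (((Set.finite_Iic n).image u).image φ) (Set.finite_singleton (φ (u 0))))
    rintro y ⟨a, rfl⟩
    by_cases h : a ∈ u '' Set.Iic n
    · simp only [h, if_true]; exact Or.inl ⟨a, h, rfl⟩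
    · simp only [h, if_false]; exact Or.inr rfl
  · obtain ⟨m, rfl⟩ := hu a
    apply tendsto_atTop_of_eventually_const (i₀ := m)
    intro n hn
    simp only [MeasureTheory.SimpleFunc.coe_mk]
    rw [if_pos ⟨m, hn, rfl⟩]

/-- Doob–Dynkin style factorization for strongly measurable maps w.r.t. a comap σ-algebra,
with complete codomain. -/
lemma sm_comap_factor {α β H : Type*} {mβ : MeasurableSpace β} (r : α → β)
    [NormedAddCommGroup H] [CompleteSpace H]
    {f : α → H} (hf : StronglyMeasurable[mβ.comap r] f) :
    ∃ h : β → H, StronglyMeasurable h ∧ ∀ a, f a = h (r a) := by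
  -- Step 1: factor simple functions
  have step1 : ∀ s : @SimpleFunc α (mβ.comap r) H,
      ∃ t : β → H, StronglyMeasurable t ∧ ∀ a, s a = t (r a) := by
    intro s
    refine @SimpleFunc.induction α H (mβ.comap r) _
      (fun s => ∃ t : β → H, StronglyMeasurable t ∧ ∀ a, s a = t (r a)) ?_ ?_ s
    · rintro c s ⟨A, hA, rfl⟩
      classical
      refine ⟨A.indicator fun _ => c, stronglyMeasurable_const.indicator hA, fun a => ?_⟩
      show (if r a ∈ A then c else 0) = A.indicator (fun _ => c) (r a)
      simp [SimpleFunc.piecewise_apply, Set.indicator_apply, Set.mem_preimage, SimpleFunc.coe_zero]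
    · rintro s₁ s₂ _ ⟨t₁, ht₁, he₁⟩ ⟨t₂, ht₂, he₂⟩
      exact ⟨t₁ + t₂, ht₁.add ht₂, fun a => by simp [he₁ a, he₂ a]⟩
  choose t ht he using fun n => step1 (hf.approx n)
  -- Step 2: the convergence set is measurable
  classical
  let C : Set β := ⋂ (k : ℕ), ⋃ (N : ℕ), ⋂ (m : ℕ), ⋂ (n : ℕ),
    {b | dist (t (N + m) b) (t (N + n) b) ≤ ((k : ℝ) + 1)⁻¹}
  have hCmeas : MeasurableSet C := by
    refine MeasurableSet.iInter fun k => MeasurableSet.iUnion fun N =>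
      MeasurableSet.iInter fun m => MeasurableSet.iInter fun n => ?_
    exact ((ht (N + m)).dist (ht (N + n))).measurable measurableSet_Iic
  have hC_iff : ∀ b, b ∈ C ↔ CauchySeq fun n => t n b := by
    intro b
    constructor
    · intro hb
      refine Metric.cauchySeq_iff'.2 fun ε hε => ?_
      obtain ⟨k, hk⟩ := exists_nat_one_div_lt hε
      rw [one_div] at hk
      obtain ⟨N, hN⟩ := Set.mem_iUnion.1 (Set.mem_iInter.1 hb k)
      refine ⟨N, fun n hn => lt_of_le_of_lt ?_ hk⟩
      have := Set.mem_iInter.1 (Set.mem_iInter.1 hN (n - N)) 0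
      simpa [Nat.add_sub_cancel' hn] using this
    · intro hb
      refine Set.mem_iInter.2 fun k => ?_
      obtain ⟨N, hN⟩ := Metric.cauchySeq_iff'.1 hb ((((k : ℝ) + 1)⁻¹) / 2)
        (by positivity)
      refine Set.mem_iUnion.2 ⟨N, Set.mem_iInter.2 fun m => Set.mem_iInter.2 fun n => ?_⟩
      have h1 := hN (N + m) (Nat.le_add_right _ _)
      have h2 := hN (N + n) (Nat.le_add_right _ _)
      calc dist (t (N + m) b) (t (N + n) b)
          ≤ dist (t (N + m) b) (t N b) + dist (t (N + n) b) (t N b) :=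
            dist_triangle_right _ _ _
        _ ≤ _ := le_of_lt (by linarith [h1, h2])
  -- Step 3: define the limit function
  let u : ℕ → β → H := fun n => C.indicator (t n)
  have hconv : ∀ b, ∃ c, Tendsto (fun n => u n b) atTop (nhds c) := by
    intro b
    by_cases hb : b ∈ C
    · obtain ⟨c, hc⟩ := cauchySeq_tendsto_of_complete ((hC_iff b).1 hb)
      exact ⟨c, by simpa [u, Set.indicator_of_mem hb] using hc⟩
    · exact ⟨0, by simp [u, Set.indicator_of_notMem hb]⟩
  let h : β → H := fun b => limUnder atTop fun n => u n b
  have hth : ∀ b, Tendsto (fun n => u n b) atTop (nhds (h b)) := fun b =>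
    tendsto_nhds_limUnder (hconv b)
  refine ⟨h, ?_, fun a => ?_⟩
  · refine stronglyMeasurable_of_tendsto atTop (fun n => (ht n).indicator hCmeas) ?_
    rw [tendsto_pi_nhds]
    exact hth
  · have h1 : Tendsto (fun n => t n (r a)) atTop (nhds (f a)) := by
      have := hf.tendsto_approx a
      simpa [fun n => he n a] using this
    have hmem : r a ∈ C := (hC_iff (r a)).2 h1.cauchySeq
    have h2 : Tendsto (fun n => u n (r a)) atTop (nhds (f a)) := by
      simpa [u, Set.indicator_of_mem hmem] using h1
    exact (tendsto_nhds_unique (hth (r a)) h2).symm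

/-- **Mecke's formula** (add-one form), characterizing Poisson random measures
with σ-finite intensity `μ`. -/
def MeckeAdd {Ω E : Type*} [MeasurableSpace Ω] [MeasurableSpace E]
    (P : Measure Ω) (μ : Measure E) (N : Ω → Measure E) : Prop :=
  ∀ f : Measure E → E → ℝ≥0∞, Measurable (Function.uncurry f) →
    ∫⁻ ω, ∫⁻ x, f (N ω) x ∂(N ω) ∂P
      = ∫⁻ ω, ∫⁻ x, f (N ω + Measure.dirac x) x ∂μ ∂P

theorem cylindrical_D1q_and_density
    {Ω E H : Type*} [MeasurableSpace Ω] [MeasurableSpace E]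
    [NormedAddCommGroup H] [InnerProductSpace ℝ H] [CompleteSpace H]
    [TopologicalSpace.SeparableSpace H]
    (P : Measure Ω) [IsProbabilityMeasure P] (μ : Measure E) [SigmaFinite μ]
    (N : Ω → Measure E) (hMecke : MeckeAdd P μ N) (hN : Measurable N) :
    (∀ (n : ℕ) (B : Fin n → Set E), (∀ i, MeasurableSet (B i)) → (∀ i, μ (B i) < ∞) →
      ∀ φ : (Fin n → ℕ) → H, (∃ C : ℝ, ∀ v, ‖φ v‖ ≤ C) →
      ∀ q : ℝ≥0∞, 1 < q → q ≠ ∞ →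
        MemLp (fun ω => φ fun i => ⌊((N ω) (B i)).toReal⌋₊) q P ∧
        MemLp (fun pr : Ω × E =>
            (φ fun i => ⌊((N pr.1 + Measure.dirac pr.2) (B i)).toReal⌋₊)
              - φ fun i => ⌊((N pr.1) (B i)).toReal⌋₊) q (P.prod μ)) ∧
    (∀ p : ℝ≥0∞, 1 < p → p ≠ ∞ →
      ∀ (F : Ω → H) (f : Measure E → H), StronglyMeasurable f →
        (∀ᵐ ω ∂P, F ω = f (N ω)) → MemLp F p P →
        ∀ ε : ℝ≥0∞, 0 < ε →
          ∃ (G : Ω → H) (g : Measure E → H), StronglyMeasurable g ∧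
            (∀ᵐ ω ∂P, G ω = g (N ω)) ∧ MemLp G ∞ P ∧
            (∀ q : ℝ≥0∞, 1 < q → q ≠ ∞ →
              MemLp G q P ∧
              MemLp (fun pr : Ω × E =>
                  g (N pr.1 + Measure.dirac pr.2) - G pr.1) q (P.prod μ)) ∧
            eLpNorm (fun ω => F ω - G ω) p P < ε) := by
  classical
  constructor
  · -- Part 1 : cylindrical functionals
    rintro n B hB hBfin φ ⟨C, hC⟩ q hq hq'
    have hφsm : StronglyMeasurable φ := sm_of_countable' φ
    have hv : Measurable fun ω => (fun i => ⌊((N ω) (B i)).toReal⌋₊ : Fin n → ℕ) :=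
      measurable_pi_lambda _ fun i =>
        (((Measure.measurable_coe (hB i)).comp hN).ennreal_toReal).nat_floor
    have hFsm : StronglyMeasurable fun ω => φ fun i => ⌊((N ω) (B i)).toReal⌋₊ :=
      hφsm.comp_measurable hv
    refine ⟨MemLp.of_bound hFsm.aestronglyMeasurable C
      (Filter.Eventually.of_forall fun ω => hC _), ?_⟩
    have hadd : Measurable fun pr : Ω × E => N pr.1 + Measure.dirac pr.2 :=
      measurable_add.comp
        ((hN.comp measurable_fst).prodMk (Measure.measurable_dirac.comp measurable_snd))
    have hw1 : Measurable fun pr : Ω × E =>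
        (fun i => ⌊((N pr.1 + Measure.dirac pr.2) (B i)).toReal⌋₊ : Fin n → ℕ) :=
      measurable_pi_lambda _ fun i =>
        (((Measure.measurable_coe (hB i)).comp hadd).ennreal_toReal).nat_floor
    have hw2 : Measurable fun pr : Ω × E =>
        (fun i => ⌊((N pr.1) (B i)).toReal⌋₊ : Fin n → ℕ) :=
      measurable_pi_lambda _ fun i =>
        (((Measure.measurable_coe (hB i)).comp (hN.comp measurable_fst)).ennreal_toReal).nat_floor
    have hDsm : StronglyMeasurable (fun pr : Ω × E =>
        (φ fun i => ⌊((N pr.1 + Measure.dirac pr.2) (B i)).toReal⌋₊)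
          - φ fun i => ⌊((N pr.1) (B i)).toReal⌋₊) :=
      (hφsm.comp_measurable hw1).sub (hφsm.comp_measurable hw2)
    have hSmeas : MeasurableSet (⋃ i, B i) := MeasurableSet.iUnion fun i => hB i
    have hSfin : μ (⋃ i, B i) < ∞ :=
      lt_of_le_of_lt (measure_iUnion_le B)
        (by rw [tsum_fintype]; exact ENNReal.sum_lt_top.2 fun i _ => hBfin i)
    have hkey : (fun pr : Ω × E =>
        (φ fun i => ⌊((N pr.1 + Measure.dirac pr.2) (B i)).toReal⌋₊)
          - φ fun i => ⌊((N pr.1) (B i)).toReal⌋₊)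
        = (Set.univ ×ˢ (⋃ i, B i)).indicator (fun pr : Ω × E =>
        (φ fun i => ⌊((N pr.1 + Measure.dirac pr.2) (B i)).toReal⌋₊)
          - φ fun i => ⌊((N pr.1) (B i)).toReal⌋₊) := by
      funext pr
      by_cases hx : pr.2 ∈ ⋃ i, B i
      · rw [Set.indicator_of_mem (Set.mem_prod.2 ⟨Set.mem_univ _, hx⟩)]
      · rw [Set.indicator_of_notMem (fun hmem => hx (Set.mem_prod.1 hmem).2)]
        have heq : ∀ i, (N pr.1 + Measure.dirac pr.2) (B i) = N pr.1 (B i) := by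
          intro i
          rw [Measure.add_apply, Measure.dirac_apply' _ (hB i),
            Set.indicator_of_notMem (fun hmem => hx (Set.mem_iUnion.2 ⟨i, hmem⟩)), add_zero]
        simp only [heq, sub_self]
    rw [hkey, memLp_indicator_iff_restrict (MeasurableSet.univ.prod hSmeas)]
    haveI : IsFiniteMeasure ((P.prod μ).restrict (Set.univ ×ˢ (⋃ i, B i))) := by
      constructor
      rw [Measure.restrict_apply_univ, Measure.prod_prod, measure_univ, one_mul]
      exact hSfin
    exact MemLp.of_bound hDsm.aestronglyMeasurable (C + C)
      (Filter.Eventually.of_forall fun pr =>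
        (norm_sub_le _ _).trans (add_le_add (hC _) (hC _)))
  · -- Part 2 : density
    intro p hp hp' F f hfsm hFf hF ε hε
    have hp0 : p ≠ 0 := (zero_lt_one.trans hp).ne'
    have hptR : 0 < p.toReal := ENNReal.toReal_pos hp0 hp'
    set Q : Measure (Measure E) := P.map N with hQdef
    haveI : IsProbabilityMeasure Q := Measure.isProbabilityMeasure_map hN.aemeasurable
    -- the restriction maps and the filtration they generate
    set r : ℕ → Measure E → Measure E := fun k ν => ν.restrict (spanningSets μ k) with hr_def
    have hr : ∀ k, Measurable (r k) := by
      intro k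
      refine Measure.measurable_of_measurable_coe _ fun s hs => ?_
      simp only [hr_def, Measure.restrict_apply hs]
      exact Measure.measurable_coe (hs.inter (measurableSet_spanningSets μ k))
    have hrcomp : ∀ k l, k ≤ l → ∀ ν, r k (r l ν) = r k ν := by
      intro k l hkl ν
      show (ν.restrict _).restrict _ = _
      rw [Measure.restrict_restrict (measurableSet_spanningSets μ k),
        Set.inter_eq_self_of_subset_left (monotone_spanningSets μ hkl)]
    set ℱ : Filtration ℕ (inferInstance : MeasurableSpace (Measure E)) :=
      { seq := fun k => MeasurableSpace.comap (r k) inferInstance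
        mono' := by
          intro k l hkl
          have h1 : r k = r k ∘ r l := (funext fun ν => (hrcomp k l hkl ν)).symm
          calc MeasurableSpace.comap (r k) inferInstance
              = (MeasurableSpace.comap (r k) inferInstance).comap (r l) := by
                rw [MeasurableSpace.comap_comp, ← h1]
            _ ≤ MeasurableSpace.comap (r l) inferInstance :=
                MeasurableSpace.comap_mono (hr k).comap_le
        le' := fun k => (hr k).comap_le } with hℱdef
    have hsup : (inferInstance : MeasurableSpace (Measure E)) ≤ ⨆ k, ℱ k := by
      change (⨆ (s : Set E) (_ : MeasurableSet s),
        (borel ℝ≥0∞).comap fun ν : Measure E => ν s) ≤ _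
      refine iSup_le fun s => iSup_le fun hs => ?_
      have hmeas : Measurable[⨆ k, ℱ k] fun ν : Measure E => ν s := by
        have heq : (fun ν : Measure E => ν s) = fun ν => ⨆ k, (r k ν) s := by
          funext ν
          calc ν s = ν (⋃ k, s ∩ spanningSets μ k) := by
                rw [← Set.inter_iUnion, iUnion_spanningSets, Set.inter_univ]
            _ = ⨆ k, ν (s ∩ spanningSets μ k) :=
                Monotone.measure_iUnion (fun k l hkl =>
                  Set.inter_subset_inter_right _ (monotone_spanningSets μ hkl))
            _ = ⨆ k, (r k ν) s := by
                simp only [hr_def, Measure.restrict_apply hs]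
        rw [heq]
        refine Measurable.iSup fun k => ?_
        have h1 : Measurable[ℱ k] (r k) := Measurable.of_comap_le le_rfl
        exact ((Measure.measurable_coe hs).comp h1).mono (le_iSup (fun k => ℱ k) k) le_rfl
      exact Measurable.comap_le hmeas
    -- move `f` to the space of measures
    have hfQ : MemLp f p Q := by
      have h1 : MemLp (fun ω => f (N ω)) p P := MemLp.ae_eq hFf hF
      exact (memLp_map_measure_iff hfsm.aestronglyMeasurable hN.aemeasurable).2 h1
    set δ : ℝ≥0∞ := min ε 1 with hδdef
    have hδ0 : δ ≠ 0 := (lt_min hε zero_lt_one).ne'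
    have hδ2 : (δ / 2 : ℝ≥0∞) ≠ 0 := by
      simp only [ne_eq, ENNReal.div_eq_zero_iff, hδ0, false_or]
      exact ENNReal.ofNat_ne_top
    have hδ2pos : (0 : ℝ≥0∞) < δ / 2 := pos_iff_ne_zero.2 hδ2
    obtain ⟨s, hs_close, -⟩ := hfQ.exists_simpleFunc_eLpNorm_sub_lt hp' hδ2
    obtain ⟨C₀, hC₀⟩ := s.exists_forall_norm_le
    set M : ℝ := max C₀ 0 + 1 with hMdef
    have hM : 0 < M := by positivity
    have hsM : ∀ ν, ‖s ν‖ ≤ M := fun ν =>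
      (hC₀ ν).trans (by simp only [hMdef]; linarith [le_max_left C₀ (0:ℝ)])
    -- truncation map
    set trunc : H → H := fun x => (M / max M ‖x‖) • x with htruncdef
    have hmaxpos : ∀ x : H, 0 < max M ‖x‖ := fun x => lt_of_lt_of_le hM (le_max_left _ _)
    have htrunc_cont : Continuous trunc :=
      (continuous_const.div (continuous_const.max continuous_norm)
        fun x => (hmaxpos x).ne').smul continuous_id
    have htrunc_eq : ∀ x : H, ‖x‖ ≤ M → trunc x = x := fun x hx => by
      simp only [htruncdef, max_eq_left hx, div_self hM.ne', one_smul]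
    have htrunc_norm : ∀ x : H, ‖trunc x‖ ≤ M := by
      intro x
      simp only [htruncdef, norm_smul, Real.norm_eq_abs,
        abs_of_nonneg (div_nonneg hM.le (hmaxpos x).le)]
      rw [div_mul_eq_mul_div, div_le_iff₀ (hmaxpos x)]
      exact mul_le_mul_of_nonneg_left (le_max_right _ _) hM.le
    -- the approximating martingale of the simple function s
    have happrox : ∃ g : ℕ → Measure E → H, (∀ k, StronglyMeasurable[ℱ k] (g k)) ∧
        ∀ᵐ ν ∂Q, Tendsto (fun k => g k ν) atTop (nhds (s ν)) := by
      refine SimpleFunc.induction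
        (motive := fun u : SimpleFunc (Measure E) H => ∃ g : ℕ → Measure E → H,
          (∀ k, StronglyMeasurable[ℱ k] (g k)) ∧
          ∀ᵐ ν ∂Q, Tendsto (fun k => g k ν) atTop (nhds (u ν))) ?_ ?_ s
      · intro c A hA
        refine ⟨fun k ν => (MeasureTheory.condExp (ℱ k) Q (A.indicator fun _ => (1:ℝ)) ν) • c,
          fun k => stronglyMeasurable_condExp.smul_const _, ?_⟩
        have hint : Integrable (A.indicator fun _ => (1:ℝ)) Q :=
          (integrable_const (1:ℝ)).indicator hA
        have hsm' : StronglyMeasurable[⨆ k, ℱ k] (A.indicator fun _ => (1:ℝ)) :=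
          (stronglyMeasurable_const.indicator hA).mono hsup
        filter_upwards [hint.tendsto_ae_condExp hsm'] with ν hν
        have h2 := hν.smul_const c
        have h3 : (SimpleFunc.piecewise A hA (SimpleFunc.const _ c)
            (SimpleFunc.const _ (0:H))) ν = (A.indicator (fun _ => (1:ℝ)) ν) • c := by
          simp only [SimpleFunc.piecewise_apply, SimpleFunc.coe_const, Set.indicator_apply,
            Function.const_apply]
          split_ifs <;> simp
        rw [h3]
        exact h2
      · rintro s₁ s₂ - ⟨g₁, hg₁, ht₁⟩ ⟨g₂, hg₂, ht₂⟩
        refine ⟨fun k => g₁ k + g₂ k, fun k => (hg₁ k).add (hg₂ k), ?_⟩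
        filter_upwards [ht₁, ht₂] with ν h1 h2
        simpa using h1.add h2
    obtain ⟨g0, hg0sm, hg0tendsto⟩ := happrox
    -- dominated convergence to pick a good level k
    have hDCT : Tendsto (fun k => ∫⁻ ν, (‖s ν - trunc (g0 k ν)‖₊ : ℝ≥0∞) ^ p.toReal ∂Q)
        atTop (nhds 0) := by
      have h0 : (0:ℝ≥0∞) = ∫⁻ _, (0:ℝ≥0∞) ∂Q := by simp
      rw [h0]
      refine tendsto_lintegral_of_dominated_convergence
        (fun _ => ENNReal.ofReal (2*M) ^ p.toReal) ?_ ?_ ?_ ?_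
      · intro k
        have hbase : Measurable fun ν => (‖s ν - trunc (g0 k ν)‖₊ : ℝ≥0∞) :=
          (s.stronglyMeasurable.sub
            (htrunc_cont.comp_stronglyMeasurable ((hg0sm k).mono (ℱ.le k)))).enorm
        exact (ENNReal.continuous_rpow_const.measurable).comp hbase
      · intro k
        refine Filter.Eventually.of_forall fun ν => ?_
        have h1 : ‖s ν - trunc (g0 k ν)‖ ≤ 2*M := by
          have := norm_sub_le (s ν) (trunc (g0 k ν))
          have := hsM ν
          have := htrunc_norm (g0 k ν)
          linarith
        refine ENNReal.rpow_le_rpow ?_ ENNReal.toReal_nonneg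
        rw [← ENNReal.ofReal_coe_nnreal, coe_nnnorm]
        exact ENNReal.ofReal_le_ofReal h1
      · rw [lintegral_const, measure_univ, mul_one]
        exact (ENNReal.rpow_lt_top_of_nonneg ENNReal.toReal_nonneg ENNReal.ofReal_ne_top).ne
      · filter_upwards [hg0tendsto] with ν hν
        have h3 : Tendsto (fun k => trunc (g0 k ν)) atTop (nhds (trunc (s ν))) :=
          (htrunc_cont.tendsto _).comp hν
        rw [htrunc_eq _ (hsM ν)] at h3
        have h2 : Tendsto (fun k => s ν - trunc (g0 k ν)) atTop (nhds (s ν - s ν)) :=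
          Tendsto.sub tendsto_const_nhds h3
        rw [sub_self] at h2
        have h3' := ENNReal.tendsto_coe.2 h2.nnnorm
        simp only [nnnorm_zero, ENNReal.coe_zero] at h3'
        have h4 : Tendsto (fun k => (‖s ν - trunc (g0 k ν)‖₊ : ℝ≥0∞) ^ p.toReal)
            atTop (nhds ((0:ℝ≥0∞) ^ p.toReal)) :=
          ((ENNReal.continuous_rpow_const (y := p.toReal)).tendsto 0).comp h3'
        rw [ENNReal.zero_rpow_of_pos hptR] at h4
        exact h4
    have hteLp : Tendsto (fun k => eLpNorm (fun ν => s ν - trunc (g0 k ν)) p Q)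
        atTop (nhds 0) := by
      have hrw : (fun k => eLpNorm (fun ν => s ν - trunc (g0 k ν)) p Q)
          = fun k => (∫⁻ ν, (‖s ν - trunc (g0 k ν)‖₊ : ℝ≥0∞) ^ p.toReal ∂Q) ^ (1/p.toReal) := by
        funext k
        exact eLpNorm_eq_lintegral_rpow_enorm_toReal hp0 hp'
      rw [hrw]
      have h4 : Tendsto (fun k => (∫⁻ ν, (‖s ν - trunc (g0 k ν)‖₊ : ℝ≥0∞) ^ p.toReal ∂Q)
          ^ (1/p.toReal)) atTop (nhds ((0:ℝ≥0∞) ^ (1/p.toReal))) :=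
        ((ENNReal.continuous_rpow_const (y := 1/p.toReal)).tendsto 0).comp hDCT
      rw [ENNReal.zero_rpow_of_pos (by positivity)] at h4
      exact h4
    obtain ⟨k, hk⟩ := (hteLp.eventually_lt_const hδ2pos).exists
    -- factor through the restriction map and truncate
    obtain ⟨h, hhsm, hfac⟩ := sm_comap_factor (r k)
      (show StronglyMeasurable[MeasurableSpace.comap (r k) inferInstance] (g0 k) from hg0sm k)
    set g : Measure E → H := fun ν => trunc (h (r k ν)) with hgdef
    have hgsm : StronglyMeasurable g :=
      htrunc_cont.comp_stronglyMeasurable (hhsm.comp_measurable (hr k))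
    have hgeq : ∀ ν, g ν = trunc (g0 k ν) := fun ν => by rw [hgdef]; simp only [← hfac ν]
    set G : Ω → H := fun ω => g (N ω) with hGdef
    have hGsm : StronglyMeasurable G := hgsm.comp_measurable hN
    have hGbd : ∀ ω, ‖G ω‖ ≤ M := fun ω => htrunc_norm _
    have hadd : Measurable fun pr : Ω × E => N pr.1 + Measure.dirac pr.2 :=
      measurable_add.comp
        ((hN.comp measurable_fst).prodMk (Measure.measurable_dirac.comp measurable_snd))
    refine ⟨G, g, hgsm, Filter.Eventually.of_forall fun ω => rfl,
      memLp_top_of_bound hGsm.aestronglyMeasurable M (Filter.Eventually.of_forall hGbd),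
      fun q hq hq' => ⟨MemLp.of_bound hGsm.aestronglyMeasurable M
        (Filter.Eventually.of_forall hGbd), ?_⟩, ?_⟩
    · -- the Malliavin derivative is in L^q
      have hDsm : StronglyMeasurable
          (fun pr : Ω × E => g (N pr.1 + Measure.dirac pr.2) - G pr.1) :=
        (hgsm.comp_measurable hadd).sub (hGsm.comp_measurable measurable_fst)
      have hkey : (fun pr : Ω × E => g (N pr.1 + Measure.dirac pr.2) - G pr.1)
          = (Set.univ ×ˢ spanningSets μ k).indicator
            (fun pr : Ω × E => g (N pr.1 + Measure.dirac pr.2) - G pr.1) := by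
        funext pr
        by_cases hx : pr.2 ∈ spanningSets μ k
        · rw [Set.indicator_of_mem (Set.mem_prod.2 ⟨Set.mem_univ _, hx⟩)]
        · rw [Set.indicator_of_notMem (fun hmem => hx (Set.mem_prod.1 hmem).2)]
          have hres : r k (N pr.1 + Measure.dirac pr.2) = r k (N pr.1) := by
            show (N pr.1 + Measure.dirac pr.2).restrict _ = _
            rw [Measure.restrict_add, restrict_dirac' (measurableSet_spanningSets μ k),
              if_neg hx, add_zero]
          show g (N pr.1 + Measure.dirac pr.2) - G pr.1 = 0
          rw [sub_eq_zero]
          show trunc (h (r k (N pr.1 + Measure.dirac pr.2))) = trunc (h (r k (N pr.1)))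
          rw [hres]
      rw [hkey, memLp_indicator_iff_restrict
        (MeasurableSet.univ.prod (measurableSet_spanningSets μ k))]
      haveI : IsFiniteMeasure ((P.prod μ).restrict (Set.univ ×ˢ spanningSets μ k)) := by
        constructor
        rw [Measure.restrict_apply_univ, Measure.prod_prod, measure_univ, one_mul]
        exact measure_spanningSets_lt_top μ k
      exact MemLp.of_bound hDsm.aestronglyMeasurable (M + M)
        (Filter.Eventually.of_forall fun pr =>
          (norm_sub_le _ _).trans (add_le_add (htrunc_norm _) (hGbd _)))
    · -- closeness in L^p
      have haeeq : (fun ω => F ω - G ω) =ᵐ[P] fun ω => f (N ω) - g (N ω) :=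
        hFf.mono fun ω hω => by show F ω - G ω = _; rw [hω]
      have hcongr : eLpNorm (fun ω => F ω - G ω) p P
          = eLpNorm (fun ω => f (N ω) - g (N ω)) p P := eLpNorm_congr_ae haeeq
      have hasm1 : AEStronglyMeasurable (fun ω => f (N ω) - s (N ω)) P :=
        ((hfsm.sub s.stronglyMeasurable).comp_measurable hN).aestronglyMeasurable
      have hasm2 : AEStronglyMeasurable (fun ω => s (N ω) - g (N ω)) P :=
        ((s.stronglyMeasurable.sub hgsm).comp_measurable hN).aestronglyMeasurable
      have h1 : eLpNorm (fun ω => f (N ω) - s (N ω)) p P = eLpNorm (f - ⇑s) p Q :=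
        (eLpNorm_map_measure (hfsm.sub s.stronglyMeasurable).aestronglyMeasurable
          hN.aemeasurable).symm
      have h2 : eLpNorm (fun ω => s (N ω) - g (N ω)) p P = eLpNorm (⇑s - g) p Q :=
        (eLpNorm_map_measure (s.stronglyMeasurable.sub hgsm).aestronglyMeasurable
          hN.aemeasurable).symm
      have hg_eq : eLpNorm (⇑s - g) p Q = eLpNorm (fun ν => s ν - trunc (g0 k ν)) p Q := by
        refine eLpNorm_congr_ae (Filter.Eventually.of_forall fun ν => ?_)
        simp only [Pi.sub_apply, hgeq ν]
      calc eLpNorm (fun ω => F ω - G ω) p P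
          = eLpNorm (fun ω => f (N ω) - g (N ω)) p P := hcongr
        _ ≤ eLpNorm (fun ω => f (N ω) - s (N ω)) p P
            + eLpNorm (fun ω => s (N ω) - g (N ω)) p P := by
            have hsplit : (fun ω => f (N ω) - g (N ω))
                = (fun ω => f (N ω) - s (N ω)) + fun ω => s (N ω) - g (N ω) :=
              funext fun ω => by simp [sub_add_sub_cancel]
            rw [hsplit]
            exact eLpNorm_add_le hasm1 hasm2 hp.le
        _ = eLpNorm (f - ⇑s) p Q + eLpNorm (⇑s - g) p Q := by rw [h1, h2]
        _ < δ/2 + δ/2 := ENNReal.add_lt_add hs_close (hg_eq ▸ hk)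
        _ = δ := ENNReal.add_halves δ
        _ ≤ ε := min_le_left _ _
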